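/- Characterization of critical points in the decoupled case: Suppose A = diagonal(a) and B = diagonal(b) with a, b ∈ ℝⁿ and bᵢ ≥ 0 for all i, and cᵢ ≠ 0 for all i. Let (ς,σ₁,σ₂) ∈ ℝ×ℝⁿ×ℝⁿ be such that σ₂ᵢ ≠ 0 for all i, G(ς,σ₁) is invertible, and the Fréchet derivative of P^d vanishes at (ς,σ₁,σ₂). Then ς = ½ Σᵢ bᵢ − α, and for every i one has (aᵢ + ς bᵢ + 2σ₁ᵢ)² = cᵢ² and σ₂ᵢ = fᵢ + σ₁ᵢ. -/

import Mathlib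

open Matrix BigOperators

/-- `G(ς,σ₁) = A + ς B + 2 diag(σ₁)`. -/
noncomputable def Gm {n : ℕ} (A B : Matrix (Fin n) (Fin n) ℝ) (ς : ℝ) (σ₁ : Fin n → ℝ) :
    Matrix (Fin n) (Fin n) ℝ :=
  A + ς • B + (2 : ℝ) • Matrix.diagonal σ₁

/-- The canonical dual function `P^d(ς,σ₁,σ₂)`. -/
noncomputable def Pd {n : ℕ} (A B : Matrix (Fin n) (Fin n) ℝ) (α : ℝ) (c f : Fin n → ℝ)
    (p : ℝ × (Fin n → ℝ) × (Fin n → ℝ)) : ℝ :=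
  -(1/2) * (c ⬝ᵥ (Gm A B p.1 p.2.1)⁻¹.mulVec c)
    - (1/4) * ∑ i, (f i + p.2.1 i + p.2.2 i)^2 / p.2.2 i
    - (1/2) * p.1^2 - α * p.1

private lemma affine_hasDerivAt (p q : ℝ) : HasDerivAt (fun t : ℝ => p + t * q) q 0 := by
  simpa using ((hasDerivAt_id (0:ℝ)).mul_const q).const_add p

private lemma d1 (ci gi wi : ℝ) (hgi : gi ≠ 0) :
    HasDerivAt (fun t : ℝ => ci ^ 2 / (gi + t * wi)) (-(ci ^ 2 * wi) / gi ^ 2) 0 := by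
  have h := (hasDerivAt_const (0:ℝ) (ci ^ 2)).fun_div (affine_hasDerivAt gi wi)
    (by simpa using hgi)
  refine h.congr_deriv ?_
  simp

private lemma d2 (si σi ui ri : ℝ) (hσ : σi ≠ 0) :
    HasDerivAt (fun t : ℝ => (si + t * ui) ^ 2 / (σi + t * ri))
      ((2 * si * ui * σi - si ^ 2 * ri) / σi ^ 2) 0 := by
  have h := ((affine_hasDerivAt si ui).fun_pow 2).fun_div (affine_hasDerivAt σi ri)
    (by simpa using hσ)
  refine h.congr_deriv ?_
  push_cast
  simp [pow_one]

private lemma sum_single {n : ℕ} (q : Fin n → ℝ) (j : Fin n) :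
    ∑ i, q i * (Pi.single j (1:ℝ) : Fin n → ℝ) i = q j := by
  simp [Pi.single_apply]

/-- The decoupled formula for the dual function. -/
private noncomputable def Fd {n : ℕ} (a b c f : Fin n → ℝ) (α : ℝ)
    (p : ℝ × (Fin n → ℝ) × (Fin n → ℝ)) : ℝ :=
  -(1/2) * ∑ i, (c i)^2 / (a i + p.1 * b i + 2 * p.2.1 i)
    - (1/4) * ∑ i, (f i + p.2.1 i + p.2.2 i)^2 / p.2.2 i
    - (1/2) * p.1^2 - α * p.1

private lemma Fd_diff {n : ℕ} (a b c f : Fin n → ℝ) (α ς : ℝ) (σ₁ σ₂ : Fin n → ℝ)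
    (hg : ∀ i, a i + ς * b i + 2 * σ₁ i ≠ 0) (hσ₂ : ∀ i, σ₂ i ≠ 0) :
    DifferentiableAt ℝ (Fd a b c f α) (ς, σ₁, σ₂) := by
  have t1 : DifferentiableAt ℝ (fun p : ℝ × (Fin n → ℝ) × (Fin n → ℝ) =>
      ∑ i, (c i)^2 / (a i + p.1 * b i + 2 * p.2.1 i)) (ς, σ₁, σ₂) := by
    refine DifferentiableAt.fun_sum fun i _ => ?_
    have hden : DifferentiableAt ℝ (fun p : ℝ × (Fin n → ℝ) × (Fin n → ℝ) =>
        a i + p.1 * b i + 2 * p.2.1 i) (ς, σ₁, σ₂) := by fun_prop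
    simp only [div_eq_mul_inv]
    exact (differentiableAt_const _).mul (hden.inv (hg i))
  have t2 : DifferentiableAt ℝ (fun p : ℝ × (Fin n → ℝ) × (Fin n → ℝ) =>
      ∑ i, (f i + p.2.1 i + p.2.2 i)^2 / p.2.2 i) (ς, σ₁, σ₂) := by
    refine DifferentiableAt.fun_sum fun i _ => ?_
    have hnum : DifferentiableAt ℝ (fun p : ℝ × (Fin n → ℝ) × (Fin n → ℝ) =>
        (f i + p.2.1 i + p.2.2 i)^2) (ς, σ₁, σ₂) := by fun_prop
    have hden : DifferentiableAt ℝ (fun p : ℝ × (Fin n → ℝ) × (Fin n → ℝ) =>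
        p.2.2 i) (ς, σ₁, σ₂) := by fun_prop
    simp only [div_eq_mul_inv]
    exact hnum.mul (hden.inv (hσ₂ i))
  have t3 : DifferentiableAt ℝ (fun p : ℝ × (Fin n → ℝ) × (Fin n → ℝ) =>
      (1/2 : ℝ) * p.1^2) (ς, σ₁, σ₂) := by fun_prop
  have t4 : DifferentiableAt ℝ (fun p : ℝ × (Fin n → ℝ) × (Fin n → ℝ) =>
      α * p.1) (ς, σ₁, σ₂) := by fun_prop
  exact (((t1.const_mul _).sub (t2.const_mul _)).sub t3).sub t4

private lemma Pd_eq_Fd {n : ℕ} (A B : Matrix (Fin n) (Fin n) ℝ) (a b c f : Fin n → ℝ)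
    (α ς : ℝ) (σ₁ σ₂ : Fin n → ℝ)
    (hA : A = Matrix.diagonal a) (hB : B = Matrix.diagonal b)
    (hg : ∀ i, a i + ς * b i + 2 * σ₁ i ≠ 0) :
    Pd A B α c f =ᶠ[nhds (ς, σ₁, σ₂)] Fd a b c f α := by
  have hGm : ∀ (x : ℝ) (y : Fin n → ℝ),
      Gm A B x y = Matrix.diagonal (fun i => a i + x * b i + 2 * y i) := by
    intro x y
    ext i j
    by_cases h : i = j <;>
      simp [Gm, hA, hB, Matrix.diagonal_apply, h, Matrix.add_apply, Matrix.smul_apply,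
        smul_eq_mul]
  have hU : IsOpen {p : ℝ × (Fin n → ℝ) × (Fin n → ℝ) |
      ∀ i, a i + p.1 * b i + 2 * p.2.1 i ≠ 0} := by
    have : {p : ℝ × (Fin n → ℝ) × (Fin n → ℝ) | ∀ i, a i + p.1 * b i + 2 * p.2.1 i ≠ 0}
        = ⋂ i, (fun p : ℝ × (Fin n → ℝ) × (Fin n → ℝ) =>
            a i + p.1 * b i + 2 * p.2.1 i) ⁻¹' {0}ᶜ := by
      ext p; simp [Set.mem_iInter]
    rw [this]
    exact isOpen_iInter_of_finite fun i =>
      (isOpen_compl_singleton).preimage (by fun_prop)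
  have hmem : (ς, σ₁, σ₂) ∈ {p : ℝ × (Fin n → ℝ) × (Fin n → ℝ) |
      ∀ i, a i + p.1 * b i + 2 * p.2.1 i ≠ 0} := fun i => hg i
  filter_upwards [hU.mem_nhds hmem] with p hp
  have hinv : (Gm A B p.1 p.2.1)⁻¹
      = Matrix.diagonal (fun i => (a i + p.1 * b i + 2 * p.2.1 i)⁻¹) := by
    rw [hGm]
    apply Matrix.inv_eq_right_inv
    rw [Matrix.diagonal_mul_diagonal]
    convert Matrix.diagonal_one with i
    exact mul_inv_cancel₀ (hp i)
  have hdp : c ⬝ᵥ (Gm A B p.1 p.2.1)⁻¹.mulVec c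
      = ∑ i, (c i)^2 / (a i + p.1 * b i + 2 * p.2.1 i) := by
    rw [hinv, dotProduct]
    refine Finset.sum_congr rfl fun i _ => ?_
    rw [Matrix.mulVec_diagonal]
    field_simp
  simp only [Pd, Fd, hdp]

private lemma key_lemma {n : ℕ} (a b c f : Fin n → ℝ) (α ς : ℝ) (σ₁ σ₂ : Fin n → ℝ)
    (hg : ∀ i, a i + ς * b i + 2 * σ₁ i ≠ 0) (hσ₂ : ∀ i, σ₂ i ≠ 0)
    (hF0 : HasFDerivAt (𝕜 := ℝ) (Fd a b c f α) 0 (ς, σ₁, σ₂))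
    (v1 : ℝ) (w r : Fin n → ℝ) :
    (1/2) * ∑ i, (c i)^2 * (v1 * b i + 2 * w i) / (a i + ς * b i + 2 * σ₁ i)^2
      - (1/4) * ∑ i, (2 * (f i + σ₁ i + σ₂ i) * (w i + r i) * σ₂ i
          - (f i + σ₁ i + σ₂ i)^2 * r i) / (σ₂ i)^2
      - (ς + α) * v1 = 0 := by
  set g : Fin n → ℝ := fun i => a i + ς * b i + 2 * σ₁ i with hgdef
  set s : Fin n → ℝ := fun i => f i + σ₁ i + σ₂ i with hsdef
  set v : ℝ × (Fin n → ℝ) × (Fin n → ℝ) := (v1, w, r) with hvdef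
  have hline : HasDerivAt
      (fun t : ℝ => ((ς, σ₁, σ₂) : ℝ × (Fin n → ℝ) × (Fin n → ℝ)) + t • v) v 0 := by
    simpa using ((hasDerivAt_id (0:ℝ)).smul_const v).const_add (ς, σ₁, σ₂)
  have hF0' : HasFDerivAt (𝕜 := ℝ) (Fd a b c f α) 0
      (((ς, σ₁, σ₂) : ℝ × (Fin n → ℝ) × (Fin n → ℝ)) + (0:ℝ) • v) := by
    simpa using hF0
  have h1 : HasDerivAt (fun t : ℝ => Fd a b c f α ((ς, σ₁, σ₂) + t • v)) 0 0 := by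
    simpa [Function.comp_def] using hF0'.comp_hasDerivAt (0:ℝ) hline
  have h2 : HasDerivAt (fun t : ℝ => Fd a b c f α ((ς, σ₁, σ₂) + t • v))
      (-(1/2) * ∑ i, (-((c i)^2 * (v1 * b i + 2 * w i)) / (g i)^2)
        - (1/4) * ∑ i, ((2 * s i * (w i + r i) * σ₂ i - (s i)^2 * r i) / (σ₂ i)^2)
        - (1/2) * (2 * ς * v1) - α * v1) 0 := by
    have e1 : ∀ t : ℝ, ∀ i, a i + (ς + t * v1) * b i + 2 * (σ₁ i + t * w i)
        = g i + t * (v1 * b i + 2 * w i) := by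
      intro t i; simp only [hgdef]; ring
    have e2 : ∀ t : ℝ, ∀ i, f i + (σ₁ i + t * w i) + (σ₂ i + t * r i)
        = s i + t * (w i + r i) := by
      intro t i; simp only [hsdef]; ring
    have hfun : (fun t : ℝ => Fd a b c f α ((ς, σ₁, σ₂) + t • v))
        = fun t : ℝ =>
          -(1/2) * ∑ i, (c i)^2 / (g i + t * (v1 * b i + 2 * w i))
            - (1/4) * ∑ i, (s i + t * (w i + r i))^2 / (σ₂ i + t * r i)
            - (1/2) * (ς + t * v1)^2 - α * (ς + t * v1) := by
      funext t
      simp only [Fd, hvdef, Prod.fst_add, Prod.snd_add, Prod.smul_fst, Prod.smul_snd,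
        Pi.add_apply, Pi.smul_apply, smul_eq_mul, e1 t, e2 t]
    rw [hfun]
    apply HasDerivAt.sub
    apply HasDerivAt.sub
    apply HasDerivAt.sub
    · exact (HasDerivAt.fun_sum fun i _ =>
        d1 (c i) (g i) (v1 * b i + 2 * w i) (hg i)).const_mul _
    · exact (HasDerivAt.fun_sum fun i _ =>
        d2 (s i) (σ₂ i) (w i + r i) (r i) (hσ₂ i)).const_mul _
    · have h := HasDerivAt.const_mul (1/2 : ℝ) ((affine_hasDerivAt ς v1).fun_pow 2)
      refine h.congr_deriv ?_
      push_cast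
      ring_nf
    · exact HasDerivAt.const_mul α (affine_hasDerivAt ς v1)
  have hz := h2.unique h1
  rw [← hz]
  simp only [neg_div, Finset.sum_neg_distrib]
  ring

private lemma algebra_lemma {n : ℕ} (b c f : Fin n → ℝ) (α ς : ℝ) (σ₁ σ₂ g s : Fin n → ℝ)
    (hg : ∀ i, g i ≠ 0) (hσ₂ : ∀ i, σ₂ i ≠ 0) (hc : ∀ i, c i ≠ 0)
    (hs : ∀ i, s i = f i + σ₁ i + σ₂ i)
    (key : ∀ (v1 : ℝ) (w r : Fin n → ℝ),
      (1/2) * ∑ i, (c i)^2 * (v1 * b i + 2 * w i) / (g i)^2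
        - (1/4) * ∑ i, (2 * s i * (w i + r i) * σ₂ i - (s i)^2 * r i) / (σ₂ i)^2
        - (ς + α) * v1 = 0) :
    ς = (1/2) * ∑ i, b i - α ∧ (∀ i, (g i)^2 = (c i)^2) ∧ (∀ i, σ₂ i = f i + σ₁ i) := by
  have hg2 : ∀ i, (g i) ^ 2 ≠ 0 := fun i => pow_ne_zero _ (hg i)
  have hσ2sq : ∀ i, (σ₂ i) ^ 2 ≠ 0 := fun i => pow_ne_zero _ (hσ₂ i)
  -- equation C
  have eqC : ∀ j, s j * (2 * σ₂ j - s j) = 0 := by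
    intro j
    have h := key 0 0 (Pi.single j (1:ℝ))
    have e1 : ∑ i, (c i)^2 * ((0:ℝ) * b i + 2 * (0 : Fin n → ℝ) i) / (g i)^2 = 0 := by
      simp
    have e2 : (∑ i, (2 * s i * ((0 : Fin n → ℝ) i + (Pi.single j (1:ℝ) : Fin n → ℝ) i) * σ₂ i
          - (s i)^2 * (Pi.single j (1:ℝ) : Fin n → ℝ) i) / (σ₂ i)^2)
        = (2 * s j * σ₂ j - (s j)^2) / (σ₂ j)^2 := by
      rw [show (∑ i, (2 * s i * ((0 : Fin n → ℝ) i + (Pi.single j (1:ℝ) : Fin n → ℝ) i) * σ₂ i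
          - (s i)^2 * (Pi.single j (1:ℝ) : Fin n → ℝ) i) / (σ₂ i)^2)
          = ∑ i, ((2 * s i * σ₂ i - (s i)^2) / (σ₂ i)^2) * (Pi.single j (1:ℝ) : Fin n → ℝ) i from
        Finset.sum_congr rfl fun i _ => by simp only [Pi.zero_apply]; ring]
      exact sum_single _ j
    rw [e1, e2] at h
    have h' : (2 * s j * σ₂ j - (s j)^2) / (σ₂ j)^2 = 0 := by linarith
    have h'' := (div_eq_zero_iff.mp h').resolve_right (hσ2sq j)
    nlinarith [h'']
  -- equation B
  have eqB : ∀ j, (c j)^2 * σ₂ j = (1/2) * s j * (g j)^2 := by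
    intro j
    have h := key 0 (Pi.single j (1:ℝ)) 0
    have e1 : (∑ i, (c i)^2 * ((0:ℝ) * b i + 2 * (Pi.single j (1:ℝ) : Fin n → ℝ) i) / (g i)^2)
        = 2 * (c j)^2 / (g j)^2 := by
      rw [show (∑ i, (c i)^2 * ((0:ℝ) * b i + 2 * (Pi.single j (1:ℝ) : Fin n → ℝ) i) / (g i)^2)
          = ∑ i, (2 * (c i)^2 / (g i)^2) * (Pi.single j (1:ℝ) : Fin n → ℝ) i from
        Finset.sum_congr rfl fun i _ => by ring]
      exact sum_single _ j
    have e2 : (∑ i, (2 * s i * ((Pi.single j (1:ℝ) : Fin n → ℝ) i + (0 : Fin n → ℝ) i) * σ₂ i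
          - (s i)^2 * (0 : Fin n → ℝ) i) / (σ₂ i)^2)
        = 2 * s j * σ₂ j / (σ₂ j)^2 := by
      rw [show (∑ i, (2 * s i * ((Pi.single j (1:ℝ) : Fin n → ℝ) i + (0 : Fin n → ℝ) i) * σ₂ i
          - (s i)^2 * (0 : Fin n → ℝ) i) / (σ₂ i)^2)
          = ∑ i, (2 * s i * σ₂ i / (σ₂ i)^2) * (Pi.single j (1:ℝ) : Fin n → ℝ) i from
        Finset.sum_congr rfl fun i _ => by simp only [Pi.zero_apply]; ring]
      exact sum_single _ j
    rw [e1, e2] at h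
    have hgj := hg j
    have hσj := hσ₂ j
    field_simp at h
    have h2 : (2 * σ₂ j) * (2 * (c j)^2 * σ₂ j - s j * (g j)^2) = 0 := by linear_combination σ₂ j * h
    rcases mul_eq_zero.mp h2 with h3 | h3
    · exact absurd (by linarith : σ₂ j = 0) hσj
    · linarith
  -- s = 2 σ₂
  have hseq : ∀ j, s j = 2 * σ₂ j := by
    intro j
    rcases mul_eq_zero.mp (eqC j) with h | h
    · exfalso
      have hB := eqB j
      rw [h] at hB
      simp only [mul_zero, zero_mul] at hB
      have hc2 : (c j)^2 = 0 := by
        rcases mul_eq_zero.mp hB with h1 | h1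
        · exact h1
        · exact absurd h1 (hσ₂ j)
      exact hc j (pow_eq_zero_iff two_ne_zero |>.mp hc2)
    · linarith
  have hσeq : ∀ j, σ₂ j = f j + σ₁ j := by
    intro j
    have h1 := hseq j
    have h2 := hs j
    linarith
  -- g² = c²
  have hgsq : ∀ j, (g j)^2 = (c j)^2 := by
    intro j
    have hB := eqB j
    rw [hseq j] at hB
    have h2 : ((c j)^2 - (g j)^2) * σ₂ j = 0 := by linear_combination hB
    rcases mul_eq_zero.mp h2 with h3 | h3
    · linarith
    · exact absurd h3 (hσ₂ j)
  -- equation A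
  have eqA : ς = (1/2) * ∑ i, b i - α := by
    have h := key 1 0 0
    have e1 : ∑ i, (c i)^2 * ((1:ℝ) * b i + 2 * (0 : Fin n → ℝ) i) / (g i)^2
        = ∑ i, b i := by
      refine Finset.sum_congr rfl fun i _ => ?_
      simp only [Pi.zero_apply, mul_zero, add_zero, one_mul]
      rw [← hgsq i, mul_comm, mul_div_assoc, div_self (pow_ne_zero _ (hg i)), mul_one]
    have e2 : ∑ i, (2 * s i * ((0 : Fin n → ℝ) i + (0 : Fin n → ℝ) i) * σ₂ i
          - (s i)^2 * (0 : Fin n → ℝ) i) / (σ₂ i)^2 = 0 := by simp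
    rw [e1, e2] at h
    linarith
  exact ⟨eqA, hgsq, hσeq⟩

theorem decoupled_critical_points {n : ℕ} (hn : 0 < n)
    (A B : Matrix (Fin n) (Fin n) ℝ)
    (α : ℝ) (hα : 0 < α) (c f : Fin n → ℝ)
    (a b : Fin n → ℝ)
    (hA : A = Matrix.diagonal a) (hB : B = Matrix.diagonal b)
    (hb : ∀ i, 0 ≤ b i) (hc : ∀ i, c i ≠ 0)
    (ς : ℝ) (σ₁ σ₂ : Fin n → ℝ)
    (hσ₂ : ∀ i, σ₂ i ≠ 0)
    (hG : IsUnit (Gm A B ς σ₁))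
    (hcrit : fderiv ℝ (Pd A B α c f) (ς, σ₁, σ₂) = 0) :
    ς = (1/2) * ∑ i, b i - α ∧
    (∀ i, (a i + ς * b i + 2 * σ₁ i)^2 = (c i)^2) ∧
    (∀ i, σ₂ i = f i + σ₁ i) := by
  classical
  have hGm : Gm A B ς σ₁ = Matrix.diagonal (fun i => a i + ς * b i + 2 * σ₁ i) := by
    ext i j
    by_cases h : i = j <;>
      simp [Gm, hA, hB, Matrix.diagonal_apply, h, Matrix.add_apply, Matrix.smul_apply,
        smul_eq_mul]
  have hg : ∀ i, a i + ς * b i + 2 * σ₁ i ≠ 0 := by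
    rw [hGm, Matrix.isUnit_iff_isUnit_det, Matrix.det_diagonal, isUnit_iff_ne_zero] at hG
    intro i hi
    exact hG (Finset.prod_eq_zero (Finset.mem_univ i) hi)
  have hPdF := Pd_eq_Fd A B a b c f α ς σ₁ σ₂ hA hB hg
  have hdiffF := Fd_diff a b c f α ς σ₁ σ₂ hg hσ₂
  have hfd : fderiv ℝ (Fd a b c f α) (ς, σ₁, σ₂) = 0 := by
    rw [← hPdF.fderiv_eq, hcrit]
  have hF0 : HasFDerivAt (Fd a b c f α) 0 (ς, σ₁, σ₂) := hfd ▸ hdiffF.hasFDerivAt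
  exact algebra_lemma b c f α ς σ₁ σ₂ _ _ hg hσ₂ hc (fun i => rfl)
    (key_lemma a b c f α ς σ₁ σ₂ hg hσ₂ hF0)
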